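/- arXiv:2412.05638 — 3 statements merged into one kernel-verified Lean document; each statement's English description precedes it below -/
import Mathlib

section
/- Let φ : [0,∞) → (0,∞) be differentiable, strictly decreasing, with φ(t) → 0 as t → ∞, and fix an integer n ≥ 1. For r > 0 let t(r) be the unique solution of t/φ(t) = r, and define φ̃(r) = min over δ > 0 of (δ + δ^{-2n} φ(δ^{2n+1} r)). Then φ(t(r))^{1/(2n+1)} ≤ φ̃(r) ≤ 2 φ(t(r))^{1/(2n+1)} for all r > 0. -/
open Real Filter Set

theorem stmt0 (n : ℕ) (hn : 1 ≤ n) (φ : ℝ → ℝ)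
    (hpos : ∀ t ≥ (0:ℝ), 0 < φ t)
    (hdiff : DifferentiableOn ℝ φ (Set.Ici 0))
    (hanti : StrictAntiOn φ (Set.Ici 0))
    (hlim : Tendsto φ atTop (nhds 0))
    (r t : ℝ) (hr : 0 < r) (ht : 0 < t) (hteq : t / φ t = r) :
    φ t ^ ((1:ℝ) / (2 * (n:ℝ) + 1)) ≤
      sInf {y : ℝ | ∃ δ > (0:ℝ), y = δ + δ ^ (-(2 * (n:ℝ))) * φ (δ ^ (2 * (n:ℝ) + 1) * r)} ∧
    sInf {y : ℝ | ∃ δ > (0:ℝ), y = δ + δ ^ (-(2 * (n:ℝ))) * φ (δ ^ (2 * (n:ℝ) + 1) * r)} ≤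
      2 * φ t ^ ((1:ℝ) / (2 * (n:ℝ) + 1)) := by
  have hφt : 0 < φ t := hpos t ht.le
  have hE : (0:ℝ) < 2 * (n:ℝ) + 1 := by positivity
  set δ₀ : ℝ := φ t ^ ((1:ℝ) / (2 * (n:ℝ) + 1)) with hδ₀def
  have hδ₀pos : 0 < δ₀ := Real.rpow_pos_of_pos hφt _
  have hδ₀pow : δ₀ ^ (2 * (n:ℝ) + 1) = φ t := by
    rw [hδ₀def, ← Real.rpow_mul hφt.le, one_div, inv_mul_cancel₀ hE.ne', Real.rpow_one]
  have htval : φ t * r = t := by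
    rw [← hteq]; field_simp
  -- membership of 2δ₀
  have hmem : 2 * δ₀ ∈ {y : ℝ | ∃ δ > (0:ℝ),
      y = δ + δ ^ (-(2 * (n:ℝ))) * φ (δ ^ (2 * (n:ℝ) + 1) * r)} := by
    refine ⟨δ₀, hδ₀pos, ?_⟩
    rw [hδ₀pow, htval]
    have : δ₀ ^ (-(2 * (n:ℝ))) * φ t = δ₀ := by
      rw [← hδ₀pow, ← Real.rpow_add hδ₀pos]
      norm_num
    rw [this]; ring
  -- δ₀ is a lower bound
  have hlb : ∀ y ∈ {y : ℝ | ∃ δ > (0:ℝ),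
      y = δ + δ ^ (-(2 * (n:ℝ))) * φ (δ ^ (2 * (n:ℝ) + 1) * r)}, δ₀ ≤ y := by
    rintro y ⟨δ, hδ, rfl⟩
    have hφnn : 0 < φ (δ ^ (2 * (n:ℝ) + 1) * r) := hpos _ (by positivity)
    have hrn : (0:ℝ) ≤ δ ^ (-(2 * (n:ℝ))) := Real.rpow_nonneg hδ.le _
    rcases le_or_gt δ₀ δ with h | h
    · nlinarith [mul_nonneg hrn hφnn.le]
    · -- δ < δ₀
      have h1 : δ ^ (2 * (n:ℝ) + 1) * r < t := by
        have hlt : δ ^ (2 * (n:ℝ) + 1) < δ₀ ^ (2 * (n:ℝ) + 1) :=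
          Real.rpow_lt_rpow hδ.le h hE
        calc δ ^ (2 * (n:ℝ) + 1) * r < δ₀ ^ (2 * (n:ℝ) + 1) * r :=
              mul_lt_mul_of_pos_right hlt hr
          _ = t := by rw [hδ₀pow, htval]
      have h2 : φ t < φ (δ ^ (2 * (n:ℝ) + 1) * r) :=
        hanti (mem_Ici.mpr (by positivity))
          (mem_Ici.mpr ht.le) h1
      have hp : δ ^ (2 * (n:ℝ)) ≤ δ₀ ^ (2 * (n:ℝ)) :=
        Real.rpow_le_rpow hδ.le h.le (by positivity)
      have hδpow : 0 < δ ^ (2 * (n:ℝ)) := Real.rpow_pos_of_pos hδ _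
      have hrw : δ ^ (-(2 * (n:ℝ))) = (δ ^ (2 * (n:ℝ)))⁻¹ := Real.rpow_neg hδ.le _
      have hsplit : δ₀ ^ (2 * (n:ℝ) + 1) = δ₀ * δ₀ ^ (2 * (n:ℝ)) := by
        rw [Real.rpow_add hδ₀pos, Real.rpow_one, mul_comm]
      have h3 : δ₀ ≤ δ + δ ^ (-(2 * (n:ℝ))) * φ t := by
        rw [hrw, ← hδ₀pow, hsplit]
        have key : δ₀ ≤ δ₀ * δ₀ ^ (2 * (n:ℝ)) * (δ ^ (2 * (n:ℝ)))⁻¹ := by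
          rw [← div_eq_mul_inv, le_div_iff₀ hδpow]
          nlinarith
        nlinarith
      have h4 : δ ^ (-(2 * (n:ℝ))) * φ t ≤
          δ ^ (-(2 * (n:ℝ))) * φ (δ ^ (2 * (n:ℝ) + 1) * r) :=
        mul_le_mul_of_nonneg_left h2.le hrn
      linarith
  exact ⟨le_csInf ⟨2 * δ₀, hmem⟩ hlb, csInf_le ⟨δ₀, hlb⟩ hmem⟩
end

section
/- Let Λ̃ : (0,∞) → (0,∞) be defined by Λ̃(r) = inf_{δ>0} (δ + δ^{−2n} Λ(δ^{2n+1} r)) where Λ : (0,∞) → (0,∞) is decreasing and n ≥ 1 is an integer. Then for every a > 0 and r > 0, a^{−1/(2n+1)} min{a, 1} Λ̃(r) ≤ Λ̃(a r) ≤ a^{−1/(2n+1)} max{a, 1} Λ̃(r). -/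
private def stmt10S (n : ℕ) (Λ : ℝ → ℝ) (r : ℝ) : Set ℝ :=
  {y : ℝ | ∃ δ > (0:ℝ), y = δ + δ ^ (-(2*(n:ℝ))) * Λ (δ ^ (2*(n:ℝ)+1) * r)}

private lemma stmt10_key (n : ℕ) (Λ : ℝ → ℝ)
    (hpos : ∀ r > (0:ℝ), 0 < Λ r) :
    ∀ a > (0:ℝ), ∀ r > (0:ℝ),
      sInf (stmt10S n Λ (a*r)) ≤
        a ^ (-(1:ℝ)/(2*(n:ℝ)+1)) * max a 1 * sInf (stmt10S n Λ r) := by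
  set m : ℝ := 2*(n:ℝ)+1 with hm
  have hmpos : 0 < m := by positivity
  have hSpos : ∀ r > (0:ℝ), ∀ y ∈ stmt10S n Λ r, 0 < y := by
    rintro r hr y ⟨δ, hδ, rfl⟩
    have h1 : 0 < δ ^ (-(2*(n:ℝ))) := Real.rpow_pos_of_pos hδ _
    have h2 : 0 < δ ^ m := Real.rpow_pos_of_pos hδ _
    have h3 : 0 < Λ (δ ^ m * r) := hpos _ (by positivity)
    positivity
  have hbdd : ∀ r > (0:ℝ), BddBelow (stmt10S n Λ r) :=
    fun r hr => ⟨0, fun y hy => (hSpos r hr y hy).le⟩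
  have hSne : ∀ r : ℝ, (stmt10S n Λ r).Nonempty :=
    fun r => ⟨1 + 1 ^ (-(2*(n:ℝ))) * Λ (1 ^ m * r), 1, one_pos, rfl⟩
  intro a ha r hr
  set b : ℝ := a ^ (-(1:ℝ)/m) with hbdef
  have hb : 0 < b := Real.rpow_pos_of_pos ha _
  have hbm : b ^ m = a⁻¹ := by
    rw [hbdef, ← Real.rpow_mul ha.le, show (-(1:ℝ)/m) * m = -1 by field_simp]
    exact Real.rpow_neg_one a
  have hbn : b ^ (-(2*(n:ℝ))) = a * b := by
    rw [hbdef, ← Real.rpow_mul ha.le]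
    rw [show (-(1:ℝ)/m) * (-(2*(n:ℝ))) = 1 + (-(1:ℝ)/m) by
      have : m ≠ 0 := ne_of_gt hmpos
      field_simp
      ring]
    rw [Real.rpow_add ha, Real.rpow_one]
  have har : 0 < a * r := by positivity
  have step : ∀ y ∈ stmt10S n Λ r, sInf (stmt10S n Λ (a*r)) ≤ (b * max a 1) * y := by
    rintro y ⟨δ, hδ, rfl⟩
    have hbδ : 0 < b * δ := by positivity
    have hmem : (b*δ) + (b*δ) ^ (-(2*(n:ℝ))) * Λ ((b*δ) ^ m * (a*r)) ∈ stmt10S n Λ (a*r) :=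
      ⟨b*δ, hbδ, rfl⟩
    refine le_trans (csInf_le (hbdd _ har) hmem) ?_
    have harg : (b*δ) ^ m * (a*r) = δ ^ m * r := by
      rw [Real.mul_rpow hb.le hδ.le, hbm]
      field_simp
    have hcoef : (b*δ) ^ (-(2*(n:ℝ))) = a * b * δ ^ (-(2*(n:ℝ))) := by
      rw [Real.mul_rpow hb.le hδ.le, hbn]
    rw [harg, hcoef]
    have hΛ : 0 < Λ (δ ^ m * r) := by
      have : 0 < δ ^ m := Real.rpow_pos_of_pos hδ _
      exact hpos _ (by positivity)
    have hδn : 0 < δ ^ (-(2*(n:ℝ))) := Real.rpow_pos_of_pos hδ _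
    have hmax1 : (1:ℝ) ≤ max a 1 := le_max_right _ _
    have hmaxa : a ≤ max a 1 := le_max_left _ _
    nlinarith [mul_pos hδn hΛ, mul_pos hb hδ, mul_pos (mul_pos hb hδn) hΛ]
  have hc : 0 < b * max a 1 := by
    have : (0:ℝ) < max a 1 := lt_max_of_lt_right one_pos
    positivity
  have h1 : sInf (stmt10S n Λ (a*r)) / (b * max a 1) ≤ sInf (stmt10S n Λ r) := by
    apply le_csInf (hSne r)
    intro y hy
    rw [div_le_iff₀ hc]
    calc sInf (stmt10S n Λ (a*r)) ≤ (b * max a 1) * y := step y hy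
      _ = y * (b * max a 1) := by ring
  calc sInf (stmt10S n Λ (a*r))
      = sInf (stmt10S n Λ (a*r)) / (b * max a 1) * (b * max a 1) := by
        field_simp
    _ ≤ sInf (stmt10S n Λ r) * (b * max a 1) :=
        mul_le_mul_of_nonneg_right h1 hc.le
    _ = b * max a 1 * sInf (stmt10S n Λ r) := by ring

theorem stmt10 (n : ℕ) (hn : 1 ≤ n) (Λ : ℝ → ℝ)
    (hpos : ∀ r > (0:ℝ), 0 < Λ r) (hanti : AntitoneOn Λ (Set.Ioi 0)) :
    ∀ a > (0:ℝ), ∀ r > (0:ℝ),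
      a ^ (-(1:ℝ)/(2*(n:ℝ)+1)) * min a 1 *
        sInf {y : ℝ | ∃ δ > (0:ℝ), y = δ + δ ^ (-(2*(n:ℝ))) * Λ (δ ^ (2*(n:ℝ)+1) * r)} ≤
      sInf {y : ℝ | ∃ δ > (0:ℝ), y = δ + δ ^ (-(2*(n:ℝ))) * Λ (δ ^ (2*(n:ℝ)+1) * (a * r))} ∧
      sInf {y : ℝ | ∃ δ > (0:ℝ), y = δ + δ ^ (-(2*(n:ℝ))) * Λ (δ ^ (2*(n:ℝ)+1) * (a * r))} ≤
      a ^ (-(1:ℝ)/(2*(n:ℝ)+1)) * max a 1 *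
        sInf {y : ℝ | ∃ δ > (0:ℝ), y = δ + δ ^ (-(2*(n:ℝ))) * Λ (δ ^ (2*(n:ℝ)+1) * r)} := by
  intro a ha r hr
  have hupper := stmt10_key n Λ hpos a ha r hr
  have hlow := stmt10_key n Λ hpos a⁻¹ (inv_pos.mpr ha) (a*r) (by positivity)
  rw [show a⁻¹ * (a*r) = r by field_simp] at hlow
  set m : ℝ := 2*(n:ℝ)+1 with hm
  have hmpos : 0 < m := by positivity
  constructor
  · -- lower bound
    have hK : 0 < a ^ (-(1:ℝ)/m) * min a 1 := by
      have h1 : 0 < a ^ (-(1:ℝ)/m) := Real.rpow_pos_of_pos ha _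
      have h2 : (0:ℝ) < min a 1 := lt_min ha one_pos
      positivity
    have hKC : (a ^ (-(1:ℝ)/m) * min a 1) * ((a⁻¹) ^ (-(1:ℝ)/m) * max a⁻¹ 1) = 1 := by
      have h1 : a ^ (-(1:ℝ)/m) * (a⁻¹) ^ (-(1:ℝ)/m) = 1 := by
        rw [← Real.mul_rpow ha.le (inv_nonneg.mpr ha.le), mul_inv_cancel₀ ha.ne',
          Real.one_rpow]
      have h2 : min a 1 * max a⁻¹ 1 = 1 := by
        rcases le_total a 1 with h | h
        · rw [min_eq_left h, max_eq_left (one_le_inv_iff₀.mpr ⟨ha, h⟩)]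
          exact mul_inv_cancel₀ ha.ne'
        · rw [min_eq_right h, max_eq_right (inv_le_one_of_one_le₀ h), one_mul]
      calc (a ^ (-(1:ℝ)/m) * min a 1) * ((a⁻¹) ^ (-(1:ℝ)/m) * max a⁻¹ 1)
          = (a ^ (-(1:ℝ)/m) * (a⁻¹) ^ (-(1:ℝ)/m)) * (min a 1 * max a⁻¹ 1) := by ring
        _ = 1 := by rw [h1, h2, mul_one]
    have := mul_le_mul_of_nonneg_left hlow hK.le
    calc a ^ (-(1:ℝ)/m) * min a 1 *
          sInf {y : ℝ | ∃ δ > (0:ℝ), y = δ + δ ^ (-(2*(n:ℝ))) * Λ (δ ^ m * r)}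
        ≤ a ^ (-(1:ℝ)/m) * min a 1 * ((a⁻¹) ^ (-(1:ℝ)/m) * max a⁻¹ 1 *
          sInf {y : ℝ | ∃ δ > (0:ℝ), y = δ + δ ^ (-(2*(n:ℝ))) * Λ (δ ^ m * (a*r))}) := this
      _ = (a ^ (-(1:ℝ)/m) * min a 1) * ((a⁻¹) ^ (-(1:ℝ)/m) * max a⁻¹ 1) *
          sInf {y : ℝ | ∃ δ > (0:ℝ), y = δ + δ ^ (-(2*(n:ℝ))) * Λ (δ ^ m * (a*r))} := by ring
      _ = sInf {y : ℝ | ∃ δ > (0:ℝ), y = δ + δ ^ (-(2*(n:ℝ))) * Λ (δ ^ m * (a*r))} := by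
          rw [hKC, one_mul]
  · exact hupper
end

section
/- Let σ ∈ (0,1], n ≥ 2, and let s, τ : (0,∞) → [σ, 1] satisfy: s(r) = (n/r^n) ∫₀^r τ(t) t^{n−1} dt, τ is decreasing, and τ(r)^{1} ≥ σ^{1/n} s(r)^{(n−1)/n} for all r > 0. Then there is a constant C ∈ (0,1], depending only on n and σ, such that C (s(r) − σ) ≤ τ(r) − σ ≤ s(r) − σ for all r > 0. -/
open intervalIntegral

theorem stmt12 (n : ℕ) (hn : 2 ≤ n) (σ : ℝ) (hσ0 : 0 < σ) (hσ1 : σ ≤ 1)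
    (s τ : ℝ → ℝ)
    (hs_range : ∀ r > (0:ℝ), σ ≤ s r ∧ s r ≤ 1)
    (hτ_range : ∀ r > (0:ℝ), σ ≤ τ r ∧ τ r ≤ 1)
    (hs_eq : ∀ r > (0:ℝ), s r = ((n:ℝ) / r ^ n) * ∫ t in (0:ℝ)..r, τ t * t ^ (n - 1))
    (hτ_anti : AntitoneOn τ (Set.Ioi 0))
    (hisop : ∀ r > (0:ℝ), σ ^ ((1:ℝ)/(n:ℝ)) * (s r) ^ (((n:ℝ) - 1)/(n:ℝ)) ≤ τ r) :
    ∃ C : ℝ, 0 < C ∧ C ≤ 1 ∧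
      ∀ r > (0:ℝ), C * (s r - σ) ≤ τ r - σ ∧ τ r - σ ≤ s r - σ := by
  have hn0 : (0:ℝ) < (n:ℝ) := by positivity
  -- upper bound: τ r ≤ s r for all r > 0
  have hupper : ∀ r > (0:ℝ), τ r ≤ s r := by
    intro r hr
    have hrn : (0:ℝ) < r ^ n := by positivity
    -- integrability of the integrand
    have hint : IntervalIntegrable (fun t => τ t * t ^ (n-1)) MeasureTheory.volume 0 r := by
      by_contra hni
      have h0 : (∫ t in (0:ℝ)..r, τ t * t ^ (n - 1)) = 0 :=
        intervalIntegral.integral_undef hni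
      have := hs_eq r hr
      rw [h0, mul_zero] at this
      have := (hs_range r hr).1
      linarith
    have hint2 : IntervalIntegrable (fun t => τ r * t ^ (n-1)) MeasureTheory.volume 0 r := by
      apply IntervalIntegrable.const_mul
      exact intervalIntegral.intervalIntegrable_pow _
    have hmono : ∀ t ∈ Set.Icc (0:ℝ) r, τ r * t ^ (n-1) ≤ τ t * t ^ (n-1) := by
      intro t ht
      rcases eq_or_lt_of_le ht.1 with h | h
      · have : t ^ (n-1) = 0 := by
          rw [← h]
          exact zero_pow (by omega)
        simp [this]
      · have := hτ_anti (Set.mem_Ioi.2 h) (Set.mem_Ioi.2 hr) ht.2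
        have htp : (0:ℝ) ≤ t ^ (n-1) := by positivity
        nlinarith
    have hIle : (∫ t in (0:ℝ)..r, τ r * t ^ (n-1)) ≤ ∫ t in (0:ℝ)..r, τ t * t ^ (n-1) :=
      intervalIntegral.integral_mono_on hr.le hint2 hint hmono
    have hIval : (∫ t in (0:ℝ)..r, τ r * t ^ (n-1)) = τ r * (r ^ n / n) := by
      rw [intervalIntegral.integral_const_mul, integral_pow]
      have h1 : n - 1 + 1 = n := by omega
      have h2 : ((n - 1 : ℕ):ℝ) + 1 = (n:ℝ) := by exact_mod_cast congrArg (Nat.cast (R := ℝ)) h1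
      rw [h1, h2, zero_pow (by omega : n ≠ 0), sub_zero]
    rw [hs_eq r hr]
    rw [div_mul_eq_mul_div, le_div_iff₀ hrn]
    calc τ r * r ^ n = (τ r * (r ^ n / n)) * n := by field_simp
      _ ≤ (∫ t in (0:ℝ)..r, τ t * t ^ (n-1)) * n := by
          rw [← hIval]; exact mul_le_mul_of_nonneg_right hIle hn0.le
      _ = (n:ℝ) * ∫ t in (0:ℝ)..r, τ t * t ^ (n-1) := by ring
  rcases eq_or_lt_of_le hσ1 with hσeq | hσlt
  · -- σ = 1: everything is trivial
    refine ⟨1, one_pos, le_refl 1, fun r hr => ?_⟩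
    have h1 := hs_range r hr
    have h2 := hτ_range r hr
    constructor <;> nlinarith
  · -- σ < 1
    set q : ℝ := ((n:ℝ) - 1)/(n:ℝ) with hq
    have hq0 : 0 < q := by
      apply div_pos _ hn0
      have : (2:ℝ) ≤ (n:ℝ) := by exact_mod_cast hn
      linarith
    have hq1 : q < 1 := by
      rw [hq, div_lt_one hn0]; linarith
    set y : ℝ := σ ^ ((1:ℝ)/(n:ℝ)) with hy
    have hσpow : σ < y := by
      rw [hy]
      have h1n : (1:ℝ)/(n:ℝ) < 1 := by
        rw [div_lt_one hn0]
        have : (2:ℝ) ≤ (n:ℝ) := by exact_mod_cast hn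
        linarith
      calc σ = σ ^ (1:ℝ) := (Real.rpow_one σ).symm
        _ < σ ^ ((1:ℝ)/(n:ℝ)) := Real.rpow_lt_rpow_of_exponent_gt hσ0 hσlt h1n
    have hσpow1 : y ≤ 1 := Real.rpow_le_one hσ0.le hσ1 (by positivity)
    set C : ℝ := (y - σ) / (1 - σ) with hC
    have h1σ : 0 < 1 - σ := by linarith
    refine ⟨C, div_pos (by linarith) h1σ, by rw [hC, div_le_one h1σ]; linarith, fun r hr => ?_⟩
    have hsr := hs_range r hr
    refine ⟨?_, by have := hupper r hr; linarith⟩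
    -- lower bound via isoperimetric inequality and concavity
    set x := s r with hx
    set a : ℝ := (1 - x)/(1 - σ) with ha
    set b : ℝ := (x - σ)/(1 - σ) with hb
    have ha0 : 0 ≤ a := div_nonneg (by linarith [hsr.2]) h1σ.le
    have hb0 : 0 ≤ b := div_nonneg (by linarith [hsr.1]) h1σ.le
    have hab : a + b = 1 := by rw [ha, hb]; field_simp; ring
    have hconc := (Real.concaveOn_rpow hq0.le hq1.le).2
      (Set.mem_Ici.2 hσ0.le) (Set.mem_Ici.2 zero_le_one) ha0 hb0 hab
    simp only [smul_eq_mul, Real.one_rpow, mul_one] at hconc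
    have haxb : a * σ + b = x := by rw [ha, hb]; field_simp; ring
    rw [haxb] at hconc
    -- hconc : a * σ ^ q + b ≤ x ^ q
    have hσ1n : (0:ℝ) < y := by rw [hy]; positivity
    have hkey : y * σ ^ q = σ := by
      rw [hy, ← Real.rpow_add hσ0]
      have : (1:ℝ)/(n:ℝ) + q = 1 := by rw [hq]; field_simp; ring
      rw [this, Real.rpow_one]
    have h2 : a * σ + b * y ≤ y * x ^ q := by
      calc a * σ + b * y
          = y * (a * σ ^ q + b) := by rw [mul_add, mul_left_comm, hkey]; ring
        _ ≤ y * x ^ q := mul_le_mul_of_nonneg_left hconc hσ1n.le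
    have hiso := hisop r hr
    rw [← hx] at hiso
    have hbC : C * (x - σ) = b * (y - σ) := by
      rw [hC, hb]; ring
    have haσ : a * σ + b * σ = σ := by
      have : (a + b) * σ = σ := by rw [hab, one_mul]
      linarith [this]
    nlinarith [h2, hiso]
end
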